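/- Let ρ: W → GL(V) be an n-dimensional representation of a group W over a field F, and suppose there exists s ∈ W acting on V as a generalized reflection. If 0 ≤ k, l ≤ n are integers such that ⋀^k V and ⋀^l V are isomorphic as W-modules, then k = l. -/

import Mathlib

open Module ExteriorAlgebra

variable {F : Type*} [Field F] {V : Type*} [AddCommGroup V] [Module F V]
  {V₂ : Type*} [AddCommGroup V₂] [Module F V₂]

/-- A (generalized) reflection: a diagonalizable endomorphism `s` with
`rank (s - id) = 1`. -/
def IsReflection (s : V →ₗ[F] V) : Prop :=
  (⨆ μ : F, Module.End.eigenspace s μ) = ⊤ ∧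
    Module.finrank F (LinearMap.range (s - LinearMap.id)) = 1

theorem extPower_map_mem (d : ℕ) (f : V →ₗ[F] V₂) {x : ExteriorAlgebra F V}
    (hx : x ∈ ⋀[F]^d V) : ExteriorAlgebra.map f x ∈ ⋀[F]^d V₂ := by
  have h : Submodule.map (ExteriorAlgebra.map f).toLinearMap (⋀[F]^d V) ≤ ⋀[F]^d V₂ := by
    rw [exteriorPower, Submodule.map_pow, ι_range_map_map]
    have h1 : Submodule.map (ι F (M := V₂)) (LinearMap.range f)
        ≤ LinearMap.range (ι F (M := V₂)) := by
      rintro - ⟨y, -, rfl⟩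
      exact ⟨y, rfl⟩
    exact pow_le_pow_left' h1 d
  exact h ⟨x, hx, rfl⟩

/-- The linear map induced on `d`-th exterior powers by a linear map; for the inclusion
`H.subtype` of a subspace `H ⊆ V` this realizes `⋀^d H` as a subspace of `⋀^d V`
(via its range). -/
noncomputable def extMap (d : ℕ) (f : V →ₗ[F] V₂) : (⋀[F]^d V) →ₗ[F] (⋀[F]^d V₂) :=
  (ExteriorAlgebra.map f).toLinearMap.restrict (fun _ hx => extPower_map_mem d f hx)

@[simp] theorem extMap_apply_coe (d : ℕ) (f : V →ₗ[F] V₂) (x : ⋀[F]^d V) :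
    (extMap d f x : ExteriorAlgebra F V₂) = ExteriorAlgebra.map f x := rfl

variable {W : Type*} [Group W]

/-- The representation of `W` on the `d`-th exterior power `⋀^d V` induced by a
representation of `W` on `V`, given by `w · (v₁ ∧ ⋯ ∧ v_d) = (w·v₁) ∧ ⋯ ∧ (w·v_d)`. -/
noncomputable def extRep (ρ : Representation F W V) (d : ℕ) :
    Representation F W (⋀[F]^d V) where
  toFun w := extMap d (ρ w)
  map_one' := by
    apply LinearMap.ext
    intro x
    apply Subtype.ext
    simp only [extMap_apply_coe, map_one]
    show (ExteriorAlgebra.map (LinearMap.id) : _) _ = _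
    rw [ExteriorAlgebra.map_id]
    rfl
  map_mul' a b := by
    apply LinearMap.ext
    intro x
    apply Subtype.ext
    simp only [extMap_apply_coe, map_mul]
    show (ExteriorAlgebra.map (ρ a ∘ₗ ρ b) : _) _ = _
    rw [← ExteriorAlgebra.map_comp_map]
    rfl

/-- Irreducibility (simplicity) of a representation: the space is nonzero and the only
invariant subspaces are `⊥` and `⊤`. -/
def Representation.IsIrreducibleRep (ρ : Representation F W V) : Prop :=
  Nontrivial V ∧
    ∀ U : Submodule F V, (∀ w : W, ∀ v ∈ U, ρ w v ∈ U) → U = ⊥ ∨ U = ⊤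

/-- Isomorphism of two representations of `W`: an equivariant linear equivalence. -/
def Representation.Iso {F W : Type*} [CommSemiring F] [Monoid W]
    {V₁ V₂ : Type*} [AddCommMonoid V₁] [Module F V₁] [AddCommMonoid V₂] [Module F V₂]
    (ρ₁ : Representation F W V₁) (ρ₂ : Representation F W V₂) : Prop :=
  ∃ e : V₁ ≃ₗ[F] V₂, ∀ (w : W) (v : V₁), e (ρ₁ w v) = ρ₂ w (e v)

/-- The wedge product `v 0 ∧ v 1 ∧ ⋯ ∧ v (d-1)` as an element of `⋀^d V`. -/
noncomputable def wedge (d : ℕ) (v : Fin d → V) : ⋀[F]^d V :=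
  ⟨ExteriorAlgebra.ιMulti F d v, ExteriorAlgebra.ιMulti_range F d ⟨v, rfl⟩⟩


theorem choose_lt_succ {m r : ℕ} (h : 2 * (r + 1) ≤ m) :
    Nat.choose m r < Nat.choose m (r + 1) := by
  have hr : r + 1 ≤ m := by omega
  have hpos : 0 < Nat.choose m r := Nat.choose_pos (by omega)
  have key := Nat.choose_succ_right_eq m r
  have h2 : Nat.choose m r * (r + 1) < Nat.choose m r * (m - r) :=
    (Nat.mul_lt_mul_left hpos).mpr (by omega)
  rw [← key] at h2
  exact Nat.lt_of_mul_lt_mul_right h2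

theorem choose_lt_of_lt {m : ℕ} : ∀ b, 2 * b ≤ m → ∀ a, a < b →
    Nat.choose m a < Nat.choose m b := by
  intro b
  induction b with
  | zero => omega
  | succ b ih =>
    intro hb a ha
    rcases Nat.lt_or_ge a b with h | h
    · exact (ih (by omega) a h).trans (choose_lt_succ hb)
    · have : a = b := by omega
      subst this
      exact choose_lt_succ hb

theorem choose_eq_cases {m a b : ℕ} (ha : a ≤ m) (hb : b ≤ m)
    (h : Nat.choose m a = Nat.choose m b) : a = b ∨ a + b = m := by
  have key : ∀ x : ℕ, x ≤ m → Nat.choose m x = Nat.choose m (min x (m - x)) := by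
    intro x hx
    rcases min_cases x (m - x) with ⟨h1, _⟩ | ⟨h1, _⟩
    · rw [h1]
    · rw [h1, Nat.choose_symm hx]
  have hmin : ∀ x : ℕ, 2 * min x (m - x) ≤ m := by intro x; omega
  by_contra hc
  push_neg at hc
  obtain ⟨hne, hsum⟩ := hc
  have hminne : min a (m - a) ≠ min b (m - b) := by omega
  rcases Nat.lt_or_ge (min a (m - a)) (min b (m - b)) with hlt | hge
  · have := choose_lt_of_lt _ (hmin b) _ hlt
    rw [← key a ha, ← key b hb] at this
    omega
  · have hlt : min b (m - b) < min a (m - a) := by omega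
    have := choose_lt_of_lt _ (hmin a) _ hlt
    rw [← key a ha, ← key b hb] at this
    omega

variable {ι : Type*} [Fintype ι] [DecidableEq ι]

theorem card_subsets (d : ℕ) :
    Fintype.card {I : Finset ι // I.card = d} = (Fintype.card ι).choose d := by
  exact Fintype.card_finset_len d

theorem card_subsets_mem (i₀ : ι) (d : ℕ) (hd : 1 ≤ d) :
    Fintype.card {I : Finset ι // I.card = d ∧ i₀ ∈ I}
      = (Fintype.card ι - 1).choose (d - 1) := by
  have e : {I : Finset ι // I.card = d ∧ i₀ ∈ I} ≃
      {J : Finset {i : ι // i ≠ i₀} // J.card = d - 1} := by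
    refine ⟨fun I => ⟨(I.1.erase i₀).subtype _, ?_⟩,
      fun J => ⟨insert i₀ (J.1.map (Function.Embedding.subtype _)), ?_, Finset.mem_insert_self _ _⟩,
      ?_, ?_⟩
    · rw [Finset.card_subtype]
      rw [Finset.filter_true_of_mem, Finset.card_erase_of_mem I.2.2, I.2.1]
      intro x hx
      exact Finset.ne_of_mem_erase hx
    · rw [Finset.card_insert_of_notMem, Finset.card_map, J.2]
      · omega
      · simp
    · rintro ⟨I, hI, hi⟩
      ext x
      simp only [Finset.mem_insert, Finset.mem_map, Finset.mem_subtype,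
        Function.Embedding.coe_subtype, Finset.mem_erase]
      constructor
      · rintro (rfl | ⟨y, ⟨hy1, hy2⟩, rfl⟩)
        · exact hi
        · exact hy2
      · intro hx
        by_cases hx0 : x = i₀
        · exact Or.inl hx0
        · exact Or.inr ⟨⟨x, hx0⟩, ⟨hx0, hx⟩, rfl⟩
    · rintro ⟨J, hJ⟩
      ext ⟨x, hx⟩
      simp [Finset.mem_subtype, Finset.mem_erase, hx]
  rw [Fintype.card_congr e, Fintype.card_finset_len, Fintype.card_subtype_compl,
    Fintype.card_subtype_eq]


section RankDiag
variable {M : Type*} [AddCommGroup M] [Module F M]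

theorem rank_diagonal {κ : Type*} [Fintype κ] [DecidableEq κ] (B : Basis κ F M)
    (T : M →ₗ[F] M) (ν : κ → F) [DecidablePred fun i => ν i ≠ 0] (hT : ∀ i, T (B i) = ν i • B i) :
    finrank F (LinearMap.range T) = Fintype.card {i : κ // ν i ≠ 0} := by
  have hrange : LinearMap.range T = Submodule.span F (B '' {i | ν i ≠ 0}) := by
    rw [LinearMap.range_eq_map, ← B.span_eq, Submodule.map_span]
    apply le_antisymm
    · rw [Submodule.span_le]
      rintro - ⟨x, ⟨i, rfl⟩, rfl⟩
      rw [hT]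
      by_cases hi : ν i = 0
      · rw [hi, zero_smul]; exact Submodule.zero_mem _
      · exact Submodule.smul_mem _ _ (Submodule.subset_span ⟨i, hi, rfl⟩)
    · rw [Submodule.span_le]
      rintro - ⟨i, hi, rfl⟩
      have : B i = (ν i)⁻¹ • T (B i) := by
        rw [hT, smul_smul, inv_mul_cancel₀ hi, one_smul]
      rw [this]
      exact Submodule.smul_mem _ _ (Submodule.subset_span ⟨B i, ⟨i, rfl⟩, rfl⟩)
  rw [hrange]
  have hli : LinearIndependent F (fun i : {i : κ // ν i ≠ 0} => B i) :=
    B.linearIndependent.comp Subtype.val Subtype.val_injective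
  have : B '' {i | ν i ≠ 0} = Set.range (fun i : {i : κ // ν i ≠ 0} => B i) := by
    ext x; simp [Set.range, Set.mem_image]
  rw [this, finrank_span_eq_card hli]

end RankDiag
section Wedge

variable {ι : Type*} [Fintype ι] [LinearOrder ι]

/-- The wedge of basis vectors indexed by a `d`-element subset `I`. -/
noncomputable def wedgeBasisFun (b : Basis ι F V) (d : ℕ)
    (I : {I : Finset ι // I.card = d}) : ⋀[F]^d V :=
  wedge d (fun j => b (I.1.orderEmbOfFin I.2 j))

/-- dual functional -/
noncomputable def dualFun (b : Basis ι F V) (d : ℕ) (J : {I : Finset ι // I.card = d}) :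
    ExteriorAlgebra F V →ₗ[F] F :=
  ExteriorAlgebra.liftAlternating (Function.update 0 d
    ((Matrix.detRowAlternating).compLinearMap
      (LinearMap.pi fun a : Fin d => b.coord (J.1.orderEmbOfFin J.2 a))))

theorem dualFun_apply (b : Basis ι F V) (d : ℕ) (I J : {I : Finset ι // I.card = d}) :
    dualFun b d J (ExteriorAlgebra.ιMulti F d (fun j => b (I.1.orderEmbOfFin I.2 j)))
      = if I = J then 1 else 0 := by
  rw [dualFun, ExteriorAlgebra.liftAlternating_apply_ιMulti, Function.update_self,
    AlternatingMap.compLinearMap_apply]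
  have hentry : ∀ a a' : Fin d,
      (LinearMap.pi fun a' : Fin d => b.coord (J.1.orderEmbOfFin J.2 a'))
        (b (I.1.orderEmbOfFin I.2 a)) a'
      = if (I.1.orderEmbOfFin I.2 a : ι) = J.1.orderEmbOfFin J.2 a' then 1 else 0 := by
    intro a a'
    simp [LinearMap.pi_apply, Basis.coord_apply, Basis.repr_self, Finsupp.single_apply]
  by_cases h : I = J
  · subst h
    rw [if_pos rfl]
    have : (fun a : Fin d => (LinearMap.pi fun a' : Fin d =>
        b.coord (I.1.orderEmbOfFin I.2 a')) (b (I.1.orderEmbOfFin I.2 a)))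
        = (1 : Matrix (Fin d) (Fin d) F) := by
      ext a a'
      rw [hentry, Matrix.one_apply]
      congr 1
      simp only [eq_iff_iff]
      exact ⟨fun hh => (I.1.orderEmbOfFin I.2).injective hh, fun hh => by rw [hh]⟩
    rw [show ((Matrix.detRowAlternating (R := F) (n := Fin d)) : _ → F) = Matrix.det from rfl,
      this, Matrix.det_one]
  · rw [if_neg h]
    -- some element of I not in J
    have hne : ¬ (I.1 ⊆ J.1) := by
      intro hsub
      exact h (Subtype.ext (Finset.eq_of_subset_of_card_le hsub (by rw [I.2, J.2])))
    obtain ⟨x, hxI, hxJ⟩ := Finset.not_subset.mp hne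
    obtain ⟨a, ha⟩ : ∃ a : Fin d, I.1.orderEmbOfFin I.2 a = x := by
      have := Finset.range_orderEmbOfFin I.1 I.2
      have hx : x ∈ Set.range (I.1.orderEmbOfFin I.2) := by rw [this]; exact hxI
      exact hx
    rw [show ((Matrix.detRowAlternating (R := F) (n := Fin d)) : _ → F) = Matrix.det from rfl]
    apply Matrix.det_eq_zero_of_row_eq_zero a
    intro a'
    rw [hentry a a', if_neg]
    intro hh
    exact hxJ (by rw [← ha, hh]; exact Finset.orderEmbOfFin_mem _ _ _)


theorem wedgeBasisFun_coe (b : Basis ι F V) (d : ℕ) (I : {I : Finset ι // I.card = d}) :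
    ((wedgeBasisFun b d I : ⋀[F]^d V) : ExteriorAlgebra F V)
      = ExteriorAlgebra.ιMulti F d (fun j => b (I.1.orderEmbOfFin I.2 j)) := rfl

theorem wedge_linearIndependent (b : Basis ι F V) (d : ℕ) :
    LinearIndependent F (wedgeBasisFun b d) := by
  have key : LinearIndependent F
      (fun I : {I : Finset ι // I.card = d} =>
        ExteriorAlgebra.ιMulti F d (fun j => b (I.1.orderEmbOfFin I.2 j))) := by
    rw [linearIndependent_iff']
    intro t g hsum J hJ
    have := congrArg (dualFun b d J) hsum
    rw [map_sum, map_zero] at this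
    simp only [map_smul, dualFun_apply, smul_eq_mul, mul_ite, mul_one, mul_zero] at this
    rwa [Finset.sum_ite_eq' t J g, if_pos hJ] at this
  have hcomp : (fun I : {I : Finset ι // I.card = d} =>
        ExteriorAlgebra.ιMulti F d (fun j => b (I.1.orderEmbOfFin I.2 j)))
      = (⋀[F]^d V).subtype ∘ wedgeBasisFun b d := rfl
  rw [hcomp] at key
  exact key.of_comp _

theorem wedge_span (b : Basis ι F V) (d : ℕ) :
    Submodule.span F (Set.range (wedgeBasisFun b d)) = ⊤ := by
  apply Submodule.map_injective_of_injective ((⋀[F]^d V).injective_subtype)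
  rw [Submodule.map_span, Submodule.map_top, Submodule.range_subtype]
  rw [← Set.range_comp]
  have hcomp : (⋀[F]^d V).subtype ∘ wedgeBasisFun b d
      = (fun I : {I : Finset ι // I.card = d} =>
        ExteriorAlgebra.ιMulti F d (fun j => b (I.1.orderEmbOfFin I.2 j))) := rfl
  rw [hcomp]
  apply le_antisymm
  · rw [Submodule.span_le]
    rintro - ⟨I, rfl⟩
    exact ExteriorAlgebra.ιMulti_range F d ⟨_, rfl⟩
  · rw [← ExteriorAlgebra.ιMulti_span_fixedDegree]
    rw [Submodule.span_le]
    rintro - ⟨v, rfl⟩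
    -- expand v in the basis
    set S : Set (ExteriorAlgebra F V) :=
      Set.range (fun I : {I : Finset ι // I.card = d} =>
        ExteriorAlgebra.ιMulti F d (fun j => b (I.1.orderEmbOfFin I.2 j))) with hS
    show ExteriorAlgebra.ιMulti F d v ∈ Submodule.span F S
    have hv : ∀ j, v j = ∑ i : ι, b.repr (v j) i • b i := by
      intro j
      exact (b.sum_equivFun (v j)).symm
    have hexp : ExteriorAlgebra.ιMulti F d v
        = ∑ r : Fin d → ι, (ExteriorAlgebra.ιMulti F d).toMultilinearMap
            (fun j => b.repr (v j) (r j) • b (r j)) := by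
      conv_lhs => rw [show v = fun j => ∑ i : ι, b.repr (v j) i • b i from funext hv]
      exact (ExteriorAlgebra.ιMulti F d).toMultilinearMap.map_sum
        (fun j i => b.repr (v j) i • b i)
    rw [hexp]
    apply Submodule.sum_mem
    intro r _
    rw [MultilinearMap.map_smul_univ]
    apply Submodule.smul_mem
    show (ExteriorAlgebra.ιMulti F d) (fun j => b (r j)) ∈ Submodule.span F S
    by_cases hr : Function.Injective r
    · -- r is injective: its image is a d-subset
      set I : Finset ι := Finset.image r Finset.univ with hI
      have hcard : I.card = d := by
        rw [hI, Finset.card_image_of_injective _ hr, Finset.card_univ, Fintype.card_fin]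
      -- permutation
      have hmem : ∀ j, r j ∈ I := fun j => Finset.mem_image_of_mem r (Finset.mem_univ j)
      set σ : Fin d → Fin d := fun j => (I.orderIsoOfFin hcard).symm ⟨r j, hmem j⟩ with hσ
      have hcomm : ∀ j, I.orderEmbOfFin hcard (σ j) = r j := by
        intro j
        have : I.orderIsoOfFin hcard (σ j) = ⟨r j, hmem j⟩ := by
          rw [hσ]; exact (I.orderIsoOfFin hcard).apply_symm_apply _
        have h2 := congrArg Subtype.val this
        rwa [Finset.coe_orderIsoOfFin_apply] at h2
      have hσinj : Function.Injective σ := by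
        intro a a' haa
        apply hr
        rw [← hcomm a, ← hcomm a', haa]
      let e : Equiv.Perm (Fin d) := Equiv.ofBijective σ (Finite.injective_iff_bijective.mp hσinj)
      have hre : (fun j => b (r j)) = (fun j => b (I.orderEmbOfFin hcard j)) ∘ e := by
        funext j
        simp only [Function.comp_apply]
        rw [show (e j : Fin d) = σ j from rfl, hcomm]
      have := AlternatingMap.map_perm (ExteriorAlgebra.ιMulti F d)
        (fun j => b (I.orderEmbOfFin hcard j)) e
      rw [← hre] at this
      rw [this]
      have hmemS : ExteriorAlgebra.ιMulti F d (fun j => b (I.orderEmbOfFin hcard j))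
          ∈ Submodule.span F S := Submodule.subset_span ⟨⟨I, hcard⟩, rfl⟩
      rcases Int.units_eq_one_or (Equiv.Perm.sign e) with h1 | h1
      · rw [h1, one_smul]; exact hmemS
      · rw [h1]
        have : ((-1 : ℤˣ) : ℤ) • ExteriorAlgebra.ιMulti F d
            (fun j => b (I.orderEmbOfFin hcard j))
            = - ExteriorAlgebra.ιMulti F d (fun j => b (I.orderEmbOfFin hcard j)) := by
          rw [Units.val_neg, Units.val_one, neg_smul, one_smul]
        rw [Units.smul_def, this]
        exact Submodule.neg_mem _ hmemS
    · have hni : ¬ Function.Injective (fun j => b (r j)) := by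
        intro hinj
        exact hr (Function.Injective.of_comp (f := b) hinj)
      rw [(ExteriorAlgebra.ιMulti F d).map_eq_zero_of_not_injective _ hni]
      exact Submodule.zero_mem _


noncomputable def wedgeBasis (b : Basis ι F V) (d : ℕ) :
    Basis {I : Finset ι // I.card = d} F (⋀[F]^d V) :=
  Basis.mk (wedge_linearIndependent b d) (wedge_span b d).ge

theorem finrank_extPower (b : Basis ι F V) (d : ℕ) :
    Module.finrank F (⋀[F]^d V) = (Fintype.card ι).choose d := by
  haveI := Module.Finite.of_basis (wedgeBasis b d)
  rw [Module.finrank_eq_card_basis (wedgeBasis b d), Fintype.card_finset_len]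

theorem extMap_wedgeBasis (b : Basis ι F V) (T : V →ₗ[F] V) (μ : ι → F)
    (hT : ∀ i, T (b i) = μ i • b i) (d : ℕ) (I : {I : Finset ι // I.card = d}) :
    extMap d T (wedgeBasis b d I) = (∏ i ∈ I.1, μ i) • wedgeBasis b d I := by
  apply Subtype.ext
  rw [extMap_apply_coe, Submodule.coe_smul, wedgeBasis, Basis.mk_apply, wedgeBasisFun_coe,
    ExteriorAlgebra.map_apply_ιMulti]
  have h1 : (⇑T ∘ fun j => b (I.1.orderEmbOfFin I.2 j))
      = fun j => μ (I.1.orderEmbOfFin I.2 j) • b (I.1.orderEmbOfFin I.2 j) := by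
    funext j; exact hT _
  rw [h1]
  have h2 : ExteriorAlgebra.ιMulti F d
        (fun j => μ (I.1.orderEmbOfFin I.2 j) • b (I.1.orderEmbOfFin I.2 j))
      = (∏ j : Fin d, μ (I.1.orderEmbOfFin I.2 j)) •
        ExteriorAlgebra.ιMulti F d (fun j => b (I.1.orderEmbOfFin I.2 j)) :=
    MultilinearMap.map_smul_univ _ _ _
  rw [h2]
  congr 1
  rw [← Finset.prod_coe_sort I.1 μ]
  exact Fintype.prod_equiv (I.1.orderIsoOfFin I.2).toEquiv _ _
    (fun j => by rw [← Finset.coe_orderIsoOfFin_apply]; rfl)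

end Wedge
theorem exists_eigen (T : V →ₗ[F] V) [FiniteDimensional F V] {n : ℕ}
    (hn : Module.finrank F V = n) (hT : IsReflection T) :
    ∃ (c : F) (b : Basis (Fin (n - 1 + 1)) F V), c ≠ 1 ∧
      (∀ i, T (b i) = (if i = 0 then c else (1 : F)) • b i) := by
  obtain ⟨hdiag, hrank⟩ := hT
  set H : Submodule F V := LinearMap.ker (T - LinearMap.id) with hH
  have hn1 : 1 ≤ n := by
    rw [← hrank, ← hn]; exact Submodule.finrank_le _
  have hHrank : Module.finrank F H = n - 1 := by
    have := LinearMap.finrank_range_add_finrank_ker (T - LinearMap.id)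
    rw [hrank, hn] at this
    rw [← hH] at this
    omega
  -- H contains the 1-eigenspace
  have heig1 : Module.End.eigenspace T 1 ≤ H := by
    intro x hx
    rw [Module.End.mem_eigenspace_iff] at hx
    simp only [hH, LinearMap.mem_ker, LinearMap.sub_apply, LinearMap.id_apply, hx, one_smul,
      sub_self]
  -- find an eigenvector outside H
  have hHne : H ≠ ⊤ := by
    intro h
    rw [h, finrank_top, hn] at hHrank
    omega
  obtain ⟨μ, hμ⟩ : ∃ μ : F, ¬ (Module.End.eigenspace T μ ≤ H) := by
    by_contra hcon
    push_neg at hcon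
    exact hHne (top_le_iff.mp (hdiag ▸ iSup_le hcon))
  obtain ⟨v, hv, hvH⟩ := SetLike.not_le_iff_exists.mp hμ
  rw [Module.End.mem_eigenspace_iff] at hv
  have hμ1 : μ ≠ 1 := fun h => hvH (heig1 (Module.End.mem_eigenspace_iff.mpr (by rw [hv, h])))
  -- basis of H
  have bH : Basis (Fin (n - 1)) F H := (Module.finBasis F H).reindex (finCongr hHrank)
  -- the candidate family
  set g : Fin (n - 1 + 1) → V := Fin.cons v (fun j => ((bH j : H) : V)) with hg
  have hli : LinearIndependent F g := by
    rw [hg, linearIndependent_fin_cons]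
    constructor
    · exact bH.linearIndependent.map' H.subtype (Submodule.ker_subtype H)
    · have : Submodule.span F (Set.range fun j => ((bH j : H) : V)) = H := by
        have : (fun j => ((bH j : H) : V)) = H.subtype ∘ bH := rfl
        rw [this, Set.range_comp, Submodule.span_image, bH.span_eq, Submodule.map_top,
          Submodule.range_subtype]
      rw [this]
      exact hvH
  have hcard : Fintype.card (Fin (n - 1 + 1)) = Module.finrank F V := by
    rw [Fintype.card_fin, hn]; omega
  refine ⟨μ, basisOfLinearIndependentOfCardEqFinrank hli hcard, hμ1, ?_⟩
  intro i
  rw [coe_basisOfLinearIndependentOfCardEqFinrank]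
  refine Fin.cases ?_ ?_ i
  · rw [if_pos rfl, hg, Fin.cons_zero]
    exact hv
  · intro j
    rw [if_neg (Fin.succ_ne_zero j), hg, Fin.cons_succ, one_smul]
    have h2 : T ((bH j : H) : V) - ((bH j : H) : V) = 0 := (bH j).2
    linear_combination (norm := module) h2

/-- Let `ρ : W → GL(V)` be an `n`-dimensional representation of a group
`W` and suppose some `s ∈ W` acts on `V` as a generalized reflection. If `0 ≤ k, l ≤ n`
and `⋀^k V ≅ ⋀^l V` as `W`-modules, then `k = l`. -/
theorem eq_of_iso_exteriorPower
    [FiniteDimensional F V] (ρ : Representation F W V)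
    {n : ℕ} (hn : Module.finrank F V = n)
    (s : W) (hs : IsReflection (ρ s))
    (k l : ℕ) (hk : k ≤ n) (hl : l ≤ n)
    (hiso : (extRep ρ k).Iso (extRep ρ l)) : k = l := by
  classical
  obtain ⟨c, b, hc, hb⟩ := exists_eigen (ρ s) hn hs
  have hn1 : 1 ≤ n := by
    have h1 := hs.2
    have h2 : Module.finrank F (LinearMap.range (ρ s - LinearMap.id)) ≤ Module.finrank F V :=
      Submodule.finrank_le _
    omega
  have hcard : Fintype.card (Fin (n - 1 + 1)) = n := by rw [Fintype.card_fin]; omega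
  obtain ⟨e, he⟩ := hiso
  -- first invariant: dimensions of the exterior powers
  have hfr : n.choose k = n.choose l := by
    rw [← hcard, ← finrank_extPower b k, ← finrank_extPower b l]
    exact e.finrank_eq
  set μ : Fin (n - 1 + 1) → F := fun i => if i = 0 then c else 1 with hμ
  -- the action of `s` minus the identity is diagonal in the wedge basis
  have hD : ∀ d : ℕ, ∀ I : {I : Finset (Fin (n - 1 + 1)) // I.card = d},
      ((extRep ρ d) s - LinearMap.id : Module.End F (⋀[F]^d V)) (wedgeBasis b d I)
        = (I.1.prod μ - 1) • wedgeBasis b d I := by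
    intro d I
    have h1 : ((extRep ρ d) s) (wedgeBasis b d I) = I.1.prod μ • wedgeBasis b d I :=
      extMap_wedgeBasis b (ρ s) μ hb d I
    rw [LinearMap.sub_apply, LinearMap.id_apply, h1]
    module
  -- second invariant: the rank of `s - 1` on each exterior power
  have hNrank : ∀ d : ℕ,
      Module.finrank F (LinearMap.range ((extRep ρ d) s - LinearMap.id : Module.End F (⋀[F]^d V)))
        = Fintype.card {I : Finset (Fin (n - 1 + 1)) // I.card = d ∧ 0 ∈ I} := by
    intro d
    rw [rank_diagonal (wedgeBasis b d) _ _ (hD d)]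
    apply Fintype.card_congr
    refine (Equiv.subtypeEquivRight ?_).trans (Equiv.subtypeSubtypeEquivSubtypeInter _ _)
    intro I
    by_cases h0 : (0 : Fin (n - 1 + 1)) ∈ I.1
    · simp only [h0, iff_true]
      have hprod : I.1.prod μ = c := by
        rw [Finset.prod_eq_single 0 (fun i _ hi => by simp [hμ, hi])
          (fun h => absurd h0 h)]
        simp [hμ]
      rw [hprod]
      intro hcc
      exact hc (by linear_combination hcc)
    · simp only [h0, iff_false, ne_eq, not_not]
      have hprod : I.1.prod μ = 1 :=
        Finset.prod_eq_one (fun i hi => by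
          have : i ≠ 0 := fun h => h0 (h ▸ hi)
          simp [hμ, this])
      rw [hprod, sub_self]
  -- transfer the rank along the equivariant isomorphism
  have hcomm : e.toLinearMap ∘ₗ ((extRep ρ k) s - LinearMap.id : Module.End F (⋀[F]^k V))
      = ((extRep ρ l) s - LinearMap.id : Module.End F (⋀[F]^l V)) ∘ₗ e.toLinearMap := by
    apply LinearMap.ext
    intro x
    simp only [LinearMap.comp_apply, LinearMap.sub_apply, LinearMap.id_apply, map_sub,
      LinearEquiv.coe_coe]
    rw [he]
  have hrankeq : Module.finrank F (LinearMap.range ((extRep ρ k) s - LinearMap.id : Module.End F (⋀[F]^k V)))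
      = Module.finrank F (LinearMap.range ((extRep ρ l) s - LinearMap.id : Module.End F (⋀[F]^l V))) := by
    calc Module.finrank F (LinearMap.range ((extRep ρ k) s - LinearMap.id : Module.End F (⋀[F]^k V)))
        = Module.finrank F (Submodule.map e.toLinearMap
            (LinearMap.range ((extRep ρ k) s - LinearMap.id : Module.End F (⋀[F]^k V)))) :=
          (LinearEquiv.finrank_map_eq e _).symm
      _ = Module.finrank F (LinearMap.range
            (e.toLinearMap ∘ₗ ((extRep ρ k) s - LinearMap.id : Module.End F (⋀[F]^k V)))) := by
          rw [LinearMap.range_comp]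
      _ = Module.finrank F (LinearMap.range
            (((extRep ρ l) s - LinearMap.id : Module.End F (⋀[F]^l V)) ∘ₗ e.toLinearMap)) := by rw [hcomm]
      _ = Module.finrank F (LinearMap.range ((extRep ρ l) s - LinearMap.id : Module.End F (⋀[F]^l V))) := by
          rw [LinearMap.range_comp_of_range_eq_top _ (LinearEquiv.range e)]
  have hN : Fintype.card {I : Finset (Fin (n - 1 + 1)) // I.card = k ∧ 0 ∈ I}
      = Fintype.card {I : Finset (Fin (n - 1 + 1)) // I.card = l ∧ 0 ∈ I} := by
    rw [← hNrank k, ← hNrank l]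
    exact hrankeq
  -- counting formulas
  have hform : ∀ d : ℕ, 1 ≤ d →
      Fintype.card {I : Finset (Fin (n - 1 + 1)) // I.card = d ∧ 0 ∈ I}
        = (n - 1).choose (d - 1) := by
    intro d hd
    rw [card_subsets_mem 0 d hd, hcard]
  have hzero : Fintype.card {I : Finset (Fin (n - 1 + 1)) // I.card = 0 ∧ 0 ∈ I} = 0 := by
    rw [Fintype.card_eq_zero_iff]
    refine ⟨fun x => ?_⟩
    obtain ⟨I, hI, h0⟩ := x
    rw [Finset.card_eq_zero] at hI
    subst hI
    exact absurd h0 (Finset.notMem_empty _)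
  -- final combinatorial argument
  have main : ∀ k' l' : ℕ, k' < l' → k' + l' = n →
      Fintype.card {I : Finset (Fin (n - 1 + 1)) // I.card = k' ∧ 0 ∈ I}
        = Fintype.card {I : Finset (Fin (n - 1 + 1)) // I.card = l' ∧ 0 ∈ I} → False := by
    intro k' l' hkl hsumn hNe
    have hl1 : 1 ≤ l' := by omega
    rw [hform l' hl1] at hNe
    rcases Nat.eq_zero_or_pos k' with rfl | hk1
    · rw [hzero] at hNe
      have : l' - 1 = n - 1 := by omega
      rw [this, Nat.choose_self] at hNe
      omega
    · rw [hform k' hk1] at hNe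
      rcases choose_eq_cases (show k' - 1 ≤ n - 1 by omega) (show l' - 1 ≤ n - 1 by omega)
        hNe with h | h <;> omega
  rcases choose_eq_cases hk hl hfr with h | h
  · exact h
  · rcases lt_trichotomy k l with hlt | heq | hlt
    · exact absurd (main k l hlt h hN) not_false
    · exact heq
    · exact absurd (main l k hlt (by omega) hN.symm) not_false
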